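/- Let w be the UTP weight of a trajectory visiting states s₀, …, s_{k−1} with branching factors bᵢ = |A(sᵢ)| ≥ 1, i.e., w = Π 1/bᵢ, and suppose the number of nodes generated along this trajectory is N = Σ bᵢ. If w = 1/X with X > 1, then N ≥ e · ln X, i.e., the number of generated nodes is at least −e · ln w. -/

import Mathlib

lemma aux_elog_le (x : ℝ) (hx : 0 < x) : Real.exp 1 * Real.log x ≤ x := by
  have he : (0:ℝ) < Real.exp 1 := Real.exp_pos 1
  have h1 : Real.log (x / Real.exp 1) ≤ x / Real.exp 1 - 1 :=
    Real.log_le_sub_one_of_pos (by positivity)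
  have h2 : Real.log (x / Real.exp 1) = Real.log x - 1 := by
    rw [Real.log_div (ne_of_gt hx) (ne_of_gt he), Real.log_exp]
  have h3 : Real.log x ≤ x / Real.exp 1 := by linarith
  calc Real.exp 1 * Real.log x ≤ Real.exp 1 * (x / Real.exp 1) := by
        exact mul_le_mul_of_nonneg_left h3 he.le
    _ = x := by field_simp

theorem stmt_16 (k : ℕ) (b : Fin k → ℝ) (hb : ∀ i, 1 ≤ b i)
    (X : ℝ) (hX : 1 < X) (hw : (∏ i, (b i)⁻¹) = X⁻¹) :
    Real.exp 1 * Real.log X ≤ ∑ i, b i := by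
  have hbpos : ∀ i, (0:ℝ) < b i := fun i => lt_of_lt_of_le one_pos (hb i)
  have hprod : (∏ i, b i) = X := by
    have : (∏ i, b i)⁻¹ = X⁻¹ := by rw [← Finset.prod_inv_distrib]; exact hw
    exact inv_injective this
  have hlog : Real.log X = ∑ i, Real.log (b i) := by
    rw [← hprod]
    exact Real.log_prod (fun i _ => ne_of_gt (hbpos i))
  rw [hlog, Finset.mul_sum]
  exact Finset.sum_le_sum fun i _ => aux_elog_le (b i) (hbpos i)
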